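/- arXiv:2105.14814 — 6 statements merged into one kernel-verified Lean document; each statement's English description precedes it below -/
import Mathlib

section
/- Let x, y, z ∈ ℤ with z > 0, gcd(x, y) = 1 and y even, and let m be a positive integer such that x² + y² = z^m. Then there exist natural numbers u, v with z = u² + v², gcd(u, v) = 1 and v even, and signs λ₁, λ₂ ∈ {−1, 1}, such that in the Gaussian integers ℤ[i] one has x + yi = λ₁(u + λ₂ v i)^m. -/
open Zsqrtd

lemma gaussian_unit_cases (ε : GaussianInt) (hε : IsUnit ε) :
    (ε.re = 1 ∧ ε.im = 0) ∨ (ε.re = -1 ∧ ε.im = 0) ∨ (ε.re = 0 ∧ (ε.im = 1 ∨ ε.im = -1)) := by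
  have h1 : ε.norm = 1 := (Zsqrtd.norm_eq_one_iff' (by norm_num) ε).mpr hε
  rw [Zsqrtd.norm_def] at h1
  have h2 : ε.re * ε.re + ε.im * ε.im = 1 := by linarith
  have ha1 : -1 ≤ ε.re := by nlinarith [sq_nonneg (ε.re + 1), sq_nonneg ε.im]
  have ha2 : ε.re ≤ 1 := by nlinarith [sq_nonneg (ε.re - 1), sq_nonneg ε.im]
  have hb1 : -1 ≤ ε.im := by nlinarith [sq_nonneg (ε.im + 1), sq_nonneg ε.re]
  have hb2 : ε.im ≤ 1 := by nlinarith [sq_nonneg (ε.im - 1), sq_nonneg ε.re]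
  interval_cases h : ε.re <;> interval_cases h' : ε.im <;> simp_all

/-- Representation of solutions of `x² + y² = z^m` (with `gcd(x,y) = 1`, `y` even,
`z > 0`) in the Gaussian integers: `z = u² + v²` with `gcd(u,v) = 1`, `v` even, and
`x + yi = λ₁(u + λ₂vi)^m` with `λ₁, λ₂ ∈ {-1, 1}`. -/
theorem sq_add_sq_eq_pow_gaussian_repr
    (x y z : ℤ) (hz : 0 < z) (hgcd : Int.gcd x y = 1) (hyeven : Even y)
    (m : ℕ) (hm : 0 < m) (heq : x ^ 2 + y ^ 2 = z ^ m) :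
    ∃ (u v : ℕ) (l₁ l₂ : ℤ),
      z = u ^ 2 + v ^ 2 ∧ Nat.gcd u v = 1 ∧ Even v ∧
      (l₁ = 1 ∨ l₁ = -1) ∧ (l₂ = 1 ∨ l₂ = -1) ∧
      ((x : GaussianInt) + (y : GaussianInt) * Zsqrtd.sqrtd
        = (l₁ : GaussianInt) * (((u : ℤ) : GaussianInt)
            + (l₂ : GaussianInt) * ((v : ℤ) : GaussianInt) * Zsqrtd.sqrtd) ^ m) := by
  have hc : IsCoprime x y := Int.isCoprime_iff_gcd_eq_one.mpr hgcd
  have hxodd : Odd x := by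
    rcases Int.even_or_odd x with hx | hx
    · exfalso
      have h2 : IsUnit (2 : ℤ) := hc.isUnit_of_dvd' hx.two_dvd hyeven.two_dvd
      rw [Int.isUnit_iff] at h2; omega
    · exact hx
  have hzmodd : Odd (z ^ m) := by
    rw [← heq]
    obtain ⟨k, hk⟩ := hyeven
    obtain ⟨j, hj⟩ := hxodd
    exact ⟨2 * j ^ 2 + 2 * j + 2 * k ^ 2, by rw [hk, hj]; ring⟩
  have hzodd : Odd z := by
    rcases Int.odd_pow.mp hzmodd with h | h
    · exact h
    · omega
  set w : GaussianInt := ⟨x, y⟩ with hw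
  have hnormw : w.norm = z ^ m := by rw [Zsqrtd.norm_def, ← heq]; ring
  have hmulstar : w * star w = ((z : ℤ) : GaussianInt) ^ m := by
    have h := (Zsqrtd.norm_eq_mul_conj w).symm
    rw [hnormw] at h
    push_cast at h
    exact h
  -- coprimality of w and star w
  have hczm : IsCoprime x (z ^ m) := by
    rw [← heq]
    have h1 : IsCoprime x (y ^ 2) := hc.pow_right
    have h2 := h1.add_mul_left_right x
    rwa [show y ^ 2 + x * x = x ^ 2 + y ^ 2 from by ring] at h2
  have h2z : IsCoprime (2 : ℤ) (z ^ m) := by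
    obtain ⟨k, hk⟩ := hzodd
    have hco : IsCoprime (2 : ℤ) z := ⟨-k, 1, by rw [hk]; ring⟩
    exact hco.pow_right
  obtain ⟨p, q, hpq⟩ := h2z.mul_left hczm
  have hsum : w + star w = ((2 * x : ℤ) : GaussianInt) := by
    ext <;> simp [hw] <;> ring
  have hwstar : IsCoprime w (star w) := by
    refine ⟨(p : ℤ) + (q : ℤ) * star w, ((p : ℤ) : GaussianInt), ?_⟩
    calc ((p : ℤ) + (q : ℤ) * star w) * w + ((p : ℤ) : GaussianInt) * star w
        = (p : ℤ) * (w + star w) + (q : ℤ) * (w * star w) := by ring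
      _ = ((p * (2 * x) + q * z ^ m : ℤ) : GaussianInt) := by
          rw [hsum, hmulstar]; push_cast; ring
      _ = 1 := by rw [hpq]; exact Int.cast_one
  obtain ⟨d, hd⟩ := exists_associated_pow_of_mul_eq_pow' hwstar hmulstar
  have hnormd : d.norm = z := by
    have h1 : (d ^ m).norm = w.norm := Zsqrtd.norm_eq_of_associated (by norm_num) hd
    have h2 : d.norm ^ m = z ^ m := by
      rw [← hnormw, ← h1]
      exact (map_pow Zsqrtd.normMonoidHom d m).symm
    have hnn : 0 ≤ d.norm := Zsqrtd.norm_nonneg (by norm_num) d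
    have h3 : d.norm.natAbs ^ m = z.natAbs ^ m := by
      rw [← Int.natAbs_pow, ← Int.natAbs_pow, h2]
    have h4 := Nat.pow_left_injective hm.ne' h3
    omega
  -- adjust so that the real part is odd
  have hsqrtd_mul : (sqrtd : GaussianInt) * sqrtd = -1 := by ext <;> simp
  have key : ∃ e ε : GaussianInt, IsUnit ε ∧ w = ε * e ^ m ∧ e.norm = z ∧ Odd e.re := by
    obtain ⟨u0, hu0⟩ := hd
    by_cases hre : Odd d.re
    · exact ⟨d, u0, u0.isUnit, by rw [← hu0]; ring, hnormd, hre⟩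
    · have hUnit : IsUnit (sqrtd : GaussianInt) :=
        IsUnit.of_mul_eq_one (-sqrtd) (by rw [mul_neg, hsqrtd_mul]; ring)
      refine ⟨d * sqrtd, (u0 : GaussianInt) * (-sqrtd) ^ m, u0.isUnit.mul (hUnit.neg.pow m), ?_, ?_, ?_⟩
      · have h5 : ((-sqrtd) * (d * sqrtd)) ^ m = d ^ m := by
          congr 1
          rw [show (-sqrtd) * (d * sqrtd) = d * (-(sqrtd * sqrtd)) from by ring, hsqrtd_mul]
          ring
        rw [← hu0, ← h5, mul_pow]
        ring
      · rw [Zsqrtd.norm_mul, hnormd]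
        have : (sqrtd : GaussianInt).norm = 1 := by simp [Zsqrtd.norm_def]
        rw [this, mul_one]
      · have him : Odd d.im := by
          have hz2 : d.re * d.re + d.im * d.im = z := by
            have := hnormd; rw [Zsqrtd.norm_def] at this; linarith
          have hoz : Odd (d.re * d.re + d.im * d.im) := by rw [hz2]; exact hzodd
          rw [Int.odd_add] at hoz
          have h1 : ¬ Odd (d.re * d.re) := by rw [Int.odd_mul]; tauto
          have h2 : ¬ Even (d.im * d.im) := fun h => h1 (hoz.mpr h)
          rw [Int.not_even_iff_odd, Int.odd_mul] at h2
          exact h2.1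
        have : (d * sqrtd).re = -d.im := by simp [Zsqrtd.re_mul]
        rw [this]
        exact him.neg
  obtain ⟨e, ε, hεu, hwe, hne, hoddre⟩ := key
  have heim : Even e.im := by
    have hz2 : e.re * e.re + e.im * e.im = z := by
      have := hne; rw [Zsqrtd.norm_def] at this; linarith
    have hoz : Odd (e.re * e.re + e.im * e.im) := by rw [hz2]; exact hzodd
    rw [Int.odd_add] at hoz
    have h1 : Odd (e.re * e.re) := Int.odd_mul.mpr ⟨hoddre, hoddre⟩
    have h2 : Even (e.im * e.im) := hoz.mp h1
    rcases Int.even_mul.mp h2 with h | h <;> exact h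
  -- e^m ≡ 1 mod 2
  have h21 : ((2 : ℤ) : GaussianInt) ∣ e - 1 := by
    rw [Zsqrtd.intCast_dvd]
    constructor
    · simp only [Zsqrtd.re_sub, Zsqrtd.re_one]
      obtain ⟨j, hj⟩ := hoddre; omega
    · simp only [Zsqrtd.im_sub, Zsqrtd.im_one]
      obtain ⟨k, hk⟩ := heim; omega
  have h2m : ((2 : ℤ) : GaussianInt) ∣ e ^ m - 1 := by
    refine h21.trans ?_
    have := sub_dvd_pow_sub_pow e 1 m
    rwa [one_pow] at this
  obtain ⟨c, hcdef⟩ := h2m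
  have hRe : Odd ((e ^ m).re) := by
    have h := congrArg Zsqrtd.re hcdef
    simp [Zsqrtd.re_mul, Zsqrtd.re_sub] at h
    exact ⟨c.re, by omega⟩
  have hIm : Even ((e ^ m).im) := by
    have h := congrArg Zsqrtd.im hcdef
    simp [Zsqrtd.im_mul, Zsqrtd.im_sub] at h
    exact ⟨c.im, by omega⟩
  -- the unit is ±1
  have hxre : x = ε.re * (e ^ m).re - ε.im * (e ^ m).im := by
    have h := congrArg Zsqrtd.re hwe
    simpa [hw, Zsqrtd.re_mul, sub_eq_add_neg] using h
  obtain ⟨c₁, hc₁, hεeq⟩ : ∃ c₁ : ℤ, (c₁ = 1 ∨ c₁ = -1) ∧ ε = ((c₁ : ℤ) : GaussianInt) := by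
    rcases gaussian_unit_cases ε hεu with ⟨h1, h2⟩ | ⟨h1, h2⟩ | ⟨h1, h2⟩
    · exact ⟨1, Or.inl rfl, by ext <;> simp [h1, h2]⟩
    · exact ⟨-1, Or.inr rfl, by ext <;> simp [h1, h2]⟩
    · exfalso
      obtain ⟨j, hj⟩ := hxodd
      obtain ⟨k, hk⟩ := hIm
      rcases h2 with h2 | h2 <;> rw [h1, h2] at hxre <;> omega
  rw [hεeq] at hwe
  -- gcd of the components of e
  set u : ℕ := e.re.natAbs with hu
  set v : ℕ := e.im.natAbs with hv
  have hguv : Int.gcd e.re e.im = 1 := by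
    set g : ℕ := Int.gcd e.re e.im with hg
    have hdvd : ((g : ℤ) : GaussianInt) ∣ w := by
      have h1 : ((g : ℤ) : GaussianInt) ∣ e :=
        (Zsqrtd.intCast_dvd _ _).mpr ⟨Int.gcd_dvd_left _ _, Int.gcd_dvd_right _ _⟩
      rw [hwe]
      exact (h1.pow hm.ne').mul_left _
    rw [Zsqrtd.intCast_dvd] at hdvd
    have hgg : (g : ℤ) ∣ (Int.gcd x y : ℤ) := Int.dvd_coe_gcd hdvd.1 hdvd.2
    rw [hgcd] at hgg
    have hgd : g ∣ 1 := by exact_mod_cast hgg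
    exact Nat.dvd_one.mp hgd
  have hnatgcd : Nat.gcd u v = 1 := hguv
  -- signs
  set s1 : ℤ := if 0 ≤ e.re then 1 else -1 with hs1def
  set s2 : ℤ := if 0 ≤ e.im then 1 else -1 with hs2def
  have hs1 : s1 = 1 ∨ s1 = -1 := by rw [hs1def]; split_ifs <;> simp
  have hs2 : s2 = 1 ∨ s2 = -1 := by rw [hs2def]; split_ifs <;> simp
  have he1 : e.re = s1 * u := by rw [hs1def, hu]; split_ifs <;> omega
  have he2 : e.im = s2 * v := by rw [hs2def, hv]; split_ifs <;> omega
  refine ⟨u, v, c₁ * s1 ^ m, s1 * s2, ?_, hnatgcd, ?_, ?_, ?_, ?_⟩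
  · -- z = u² + v²
    have hz2 : e.re * e.re + e.im * e.im = z := by
      have := hne; rw [Zsqrtd.norm_def] at this; linarith
    rw [← hz2, he1, he2]
    rcases hs1 with h | h <;> rcases hs2 with h' | h' <;> rw [h, h'] <;> ring
  · -- Even v
    rw [Nat.even_iff]
    obtain ⟨k, hk⟩ := heim
    rw [hv]; omega
  · -- l₁ = ±1
    have h1 : IsUnit c₁ := by rcases hc₁ with h | h <;> simp [h]
    have h2 : IsUnit s1 := by rcases hs1 with h | h <;> simp [h]
    exact Int.isUnit_iff.mp (h1.mul (h2.pow m))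
  · -- l₂ = ±1
    have h1 : IsUnit s1 := by rcases hs1 with h | h <;> simp [h]
    have h2 : IsUnit s2 := by rcases hs2 with h | h <;> simp [h]
    exact Int.isUnit_iff.mp (h1.mul h2)
  · -- the identity
    have hLHS : (x : GaussianInt) + (y : GaussianInt) * sqrtd = w := by
      rw [hw, Zsqrtd.decompose]; ring
    rw [hLHS, hwe]
    clear hLHS hwe hxre
    have he3 : e = ((s1 : ℤ) : GaussianInt) *
        (((u : ℤ) : GaussianInt) + ((s1 * s2 : ℤ) : GaussianInt) * ((v : ℤ) : GaussianInt) * sqrtd) := by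
      have hed : e = ((e.re : ℤ) : GaussianInt) + sqrtd * ((e.im : ℤ) : GaussianInt) := by
        rw [← Zsqrtd.decompose]
      rw [hed, he1, he2]
      rcases hs1 with h | h <;> rcases hs2 with h' | h' <;> rw [h, h'] <;> push_cast <;> ring
    rw [he3, mul_pow]
    push_cast
    ring
end

section
/- Let m and n be positive integers with m > n, gcd(m,n) = 1, m ≢ n (mod 2) and m² + n² ≡ 5 (mod 8). If positive integers x, y, z satisfy x² + (m² − n²)^y = (m² + n²)^z, then both y and z are even. -/
/-- If `m² + n² ≡ 5 (mod 8)` (with `m > n`, `gcd(m,n) = 1`, `m ≢ n (mod 2)`) and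
positive integers `x, y, z` satisfy `x² + (m²-n²)^y = (m²+n²)^z`, then `y` and `z`
are even. -/
theorem exponents_even_of_solution
    (m n : ℕ) (hm : 0 < m) (hn : 0 < n) (hmn : n < m)
    (hgcd : Nat.gcd m n = 1) (hpar : m % 2 ≠ n % 2)
    (hmod : (m ^ 2 + n ^ 2) % 8 = 5)
    (x y z : ℕ) (hx : 0 < x) (hy : 0 < y) (hz : 0 < z)
    (heq : x ^ 2 + (m ^ 2 - n ^ 2) ^ y = (m ^ 2 + n ^ 2) ^ z) :
    Even y ∧ Even z := by
  set A := m ^ 2 - n ^ 2 with hA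
  set B := m ^ 2 + n ^ 2 with hB
  have hn2m2 : n ^ 2 < m ^ 2 := Nat.pow_lt_pow_left hmn (by norm_num)
  have hAB : A + 2 * n ^ 2 = B := by omega
  have hBodd : Odd B := by rw [Nat.odd_iff]; omega
  have hAodd : Odd A := by rw [Nat.odd_iff]; omega
  -- coprimality of n and B
  have hcopnB : Nat.Coprime n B := by
    have h1 : Nat.Coprime n (m ^ 2) := (Nat.coprime_comm.mp hgcd).pow_right 2
    have h2 := (Nat.coprime_add_mul_left_right n (m ^ 2) n).mpr h1
    have : m ^ 2 + n * n = B := by rw [hB]; ring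
    rwa [this] at h2
  -- coprimality of A and B
  have hcopAB : Nat.Coprime A B := by
    set g := Nat.gcd A B with hg
    have hgA : g ∣ A := Nat.gcd_dvd_left _ _
    have hgB : g ∣ B := Nat.gcd_dvd_right _ _
    have h1 : g ∣ 2 * m ^ 2 := by
      have : g ∣ A + B := dvd_add hgA hgB
      rwa [show A + B = 2 * m ^ 2 by omega] at this
    have h2 : g ∣ 2 * n ^ 2 := by
      have : g ∣ B - A := Nat.dvd_sub hgB hgA
      rwa [show B - A = 2 * n ^ 2 by omega] at this
    have h3 : g ∣ 2 := by
      have := Nat.dvd_gcd h1 h2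
      rwa [Nat.gcd_mul_left, Nat.Coprime.gcd_eq_one ((show Nat.Coprime m n from hgcd).pow 2 2), mul_one] at this
    have hg2 : g = 1 ∨ g = 2 := (Nat.dvd_prime Nat.prime_two).mp h3
    rcases hg2 with h | h
    · exact h
    · exfalso
      have : (2 : ℕ) ∣ B := h ▸ hgB
      omega
  -- jacobiSym (A) B = -1
  have hJAB : jacobiSym ((A : ℤ)) B = -1 := by
    have hmod' : ((A : ℤ)) % B = ((-2) * (n : ℤ) ^ 2) % B := by
      refine Int.ModEq.symm (Int.modEq_iff_dvd.mpr ?_)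
      rw [show (A : ℤ) - (-2) * (n : ℤ) ^ 2 = B by push_cast [← hAB]; ring]
    rw [jacobiSym.mod_left' hmod', jacobiSym.mul_left, jacobiSym.at_neg_two hBodd,
      jacobiSym.sq_one' (by rwa [Int.gcd_natCast_natCast]),
      ZMod.χ₈'_nat_eq_if_mod_eight]
    rw [show B % 2 = 1 by omega, hmod]
    norm_num
  -- jacobiSym (B) A = -1 by reciprocity
  have hJBA : jacobiSym ((B : ℤ)) A = -1 := by
    rw [jacobiSym.quadratic_reciprocity_one_mod_four (by omega) hAodd]
    exact hJAB
  -- x is coprime to A and to B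
  have hcopxB : Nat.Coprime x B := by
    have h1 : Nat.gcd x B ∣ A ^ y := by
      have hxd : Nat.gcd x B ∣ x ^ 2 := (Nat.gcd_dvd_left _ _).trans (dvd_pow_self x (by norm_num))
      have hBd : Nat.gcd x B ∣ B ^ z := (Nat.gcd_dvd_right _ _).trans (dvd_pow_self B hz.ne')
      have : Nat.gcd x B ∣ B ^ z - x ^ 2 := Nat.dvd_sub hBd hxd
      rwa [show B ^ z - x ^ 2 = A ^ y by omega] at this
    have := Nat.dvd_gcd h1 (Nat.gcd_dvd_right x B)
    rwa [Nat.Coprime.gcd_eq_one (hcopAB.pow_left y), Nat.dvd_one] at this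
  have hcopxA : Nat.Coprime x A := by
    have h1 : Nat.gcd x A ∣ B ^ z := by
      have hxd : Nat.gcd x A ∣ x ^ 2 := (Nat.gcd_dvd_left _ _).trans (dvd_pow_self x (by norm_num))
      have hAd : Nat.gcd x A ∣ A ^ y := (Nat.gcd_dvd_right _ _).trans (dvd_pow_self A hy.ne')
      have : Nat.gcd x A ∣ x ^ 2 + A ^ y := dvd_add hxd hAd
      rwa [heq] at this
    have := Nat.dvd_gcd h1 (Nat.gcd_dvd_right x A)
    rwa [Nat.Coprime.gcd_eq_one ((hcopAB.symm).pow_left z), Nat.dvd_one] at this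
  have heqZ : (x : ℤ) ^ 2 + (A : ℤ) ^ y = (B : ℤ) ^ z := by exact_mod_cast heq
  -- y even
  have hyE : Even y := by
    have hcong : ((x : ℤ) ^ 2) % B = ((-1) * (A : ℤ) ^ y) % B := by
      have hd : (B : ℤ) ∣ (-1) * (A : ℤ) ^ y - (x : ℤ) ^ 2 := by
        have : (-1) * (A : ℤ) ^ y - (x : ℤ) ^ 2 = -((B:ℤ) ^ z) := by linarith
        rw [this]
        exact (dvd_pow_self (B : ℤ) hz.ne').neg_right
      exact (Int.modEq_iff_dvd.mpr hd)
    have h1 : (1 : ℤ) = (-1) ^ y := by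
      calc (1 : ℤ) = jacobiSym ((x : ℤ) ^ 2) B :=
              (jacobiSym.sq_one' (by rwa [Int.gcd_natCast_natCast])).symm
        _ = jacobiSym ((-1) * (A : ℤ) ^ y) B := jacobiSym.mod_left' hcong
        _ = jacobiSym ((-1 : ℤ)) B * jacobiSym ((A : ℤ)) B ^ y := by
              rw [jacobiSym.mul_left, jacobiSym.pow_left]
        _ = (-1) ^ y := by
              rw [jacobiSym.at_neg_one hBodd, ZMod.χ₄_nat_one_mod_four (by omega), hJAB, one_mul]
    exact (neg_one_pow_eq_one_iff_even (by norm_num)).mp h1.symm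
  have hzE : Even z := by
    have hcong : ((x : ℤ) ^ 2) % A = ((B : ℤ) ^ z) % A := by
      have hd : (A : ℤ) ∣ (B : ℤ) ^ z - (x : ℤ) ^ 2 := by
        have : (B : ℤ) ^ z - (x : ℤ) ^ 2 = (A : ℤ) ^ y := by linarith
        rw [this]
        exact dvd_pow_self (A : ℤ) hy.ne'
      exact (Int.modEq_iff_dvd.mpr hd)
    have h1 : (1 : ℤ) = (-1) ^ z := by
      calc (1 : ℤ) = jacobiSym ((x : ℤ) ^ 2) A :=
              (jacobiSym.sq_one' (by rwa [Int.gcd_natCast_natCast])).symm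
        _ = jacobiSym ((B : ℤ) ^ z) A := jacobiSym.mod_left' hcong
        _ = jacobiSym ((B : ℤ)) A ^ z := jacobiSym.pow_left _ _ _
        _ = (-1) ^ z := by rw [hJBA]
    exact (neg_one_pow_eq_one_iff_even (by norm_num)).mp h1.symm
  exact ⟨hyE, hzE⟩
end

section
/- Let m and n be positive integers with m > n, gcd(m,n) = 1, m ≢ n (mod 2) and m² + n² ≡ 5 (mod 8). Suppose u and v are positive integers with u > v, gcd(u,v) = 1 and u ≢ v (mod 2), and r, k are positive integers such that u² − v² = (m² − n²)^r and u² + v² = (m² + n²)^k. Then both r and k are odd. -/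
set_option maxHeartbeats 1000000

private lemma abs_pow4 (d : ℤ) : |d| ^ 4 = d ^ 4 := by
  rw [pow_abs, abs_of_nonneg (by positivity : (0:ℤ) ≤ d ^ 4)]

private lemma sq_eq_of_pos' {a g : ℤ} (ha : 0 < a) (h : a = g ^ 2 ∨ a = -g ^ 2) : a = g ^ 2 := by
  rcases h with h | h
  · exact h
  · exfalso; nlinarith [sq_nonneg g]

/-- descent step: from x^2 = d^4 + 4 c^4 (primitive) produce a smaller solution -/
private lemma descent_step (x d c : ℤ) (hx : 0 < x) (hd : 0 < d) (hc : 0 < c)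
    (hodd : d ^ 2 % 2 = 1) (hgcd : Int.gcd (d ^ 2) (2 * c ^ 2) = 1)
    (heq : x ^ 2 = d ^ 4 + 4 * c ^ 4) :
    ∃ g h w : ℤ, 0 < g ∧ 0 < h ∧ 0 < w ∧ g < x ∧ g ^ 4 = h ^ 4 + w ^ 2 := by
  have ht : PythagoreanTriple (d ^ 2) (2 * c ^ 2) x := by
    rw [PythagoreanTriple]; linear_combination -heq
  obtain ⟨e, f, h1, h2, h3, h4, -, h6⟩ := ht.coprime_classification' hgcd hodd hx
  have hef : c ^ 2 = e * f := by linarith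
  have hefpos : 0 < e * f := by rw [← hef]; positivity
  have he : 0 < e := by
    rcases h6.lt_or_eq with h | h
    · exact h
    · exfalso; rw [← h] at hefpos; simp at hefpos
  have hf : 0 < f := by nlinarith
  have hcop : IsCoprime e f := Int.isCoprime_iff_gcd_eq_one.mpr h4
  obtain ⟨g, hg⟩ := Int.sq_of_isCoprime hcop hef.symm
  have hg' : e = g ^ 2 := sq_eq_of_pos' he hg
  obtain ⟨w, hw⟩ := Int.sq_of_isCoprime hcop.symm (by linarith [hef] : f * e = c ^ 2)
  have hw' : f = w ^ 2 := sq_eq_of_pos' hf hw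
  refine ⟨|g|, |w|, d, abs_pos.mpr ?_, abs_pos.mpr ?_, hd, ?_, ?_⟩
  · rintro rfl; simp at hg'; omega
  · rintro rfl; simp at hw'; omega
  · have h1' : |g| ≤ g ^ 2 := by nlinarith [abs_nonneg g, sq_abs g]
    nlinarith [sq_abs g, he, hf]
  · have hga : |g| ^ 4 = e ^ 2 := by rw [← sq_abs g] at hg'; rw [hg']; ring
    have h2' : |w| ^ 4 = f ^ 2 := by rw [← sq_abs w] at hw'; rw [hw']; ring
    rw [hga, h2']
    linarith [h1]

private lemma no_fermat_quartic : ∀ X : ℕ, ∀ x y z : ℤ, x.natAbs ≤ X → 0 < x → 0 < y → 0 < z →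
    x ^ 4 ≠ y ^ 4 + z ^ 2 := by
  intro X
  induction X using Nat.strong_induction_on with
  | _ X IH =>
  intro x y z hX hx hy hz heq
  by_cases hg : Int.gcd x y = 1
  case neg =>
    obtain ⟨p, hp, hpdvd⟩ := Nat.exists_prime_and_dvd hg
    have hpx : (p : ℤ) ∣ x := (Int.natCast_dvd_natCast.mpr hpdvd).trans (Int.gcd_dvd_left _ _)
    have hpy : (p : ℤ) ∣ y := (Int.natCast_dvd_natCast.mpr hpdvd).trans (Int.gcd_dvd_right _ _)
    obtain ⟨x₁, rfl⟩ := hpx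
    obtain ⟨y₁, rfl⟩ := hpy
    have hp2 : (2 : ℤ) ≤ (p : ℤ) := by exact_mod_cast hp.two_le
    have hdz : ((p : ℤ) ^ 2) ^ 2 ∣ z ^ 2 := ⟨x₁ ^ 4 - y₁ ^ 4, by linear_combination -heq⟩
    have hdz' : (p : ℤ) ^ 2 ∣ z := (Int.pow_dvd_pow_iff two_ne_zero).mp hdz
    obtain ⟨z₁, rfl⟩ := hdz'
    have hp0 : (0 : ℤ) < (p : ℤ) := by linarith
    have hx₁ : 0 < x₁ := by nlinarith
    have hy₁ : 0 < y₁ := by nlinarith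
    have hz₁ : 0 < z₁ := by nlinarith [pow_pos hp0 2]
    have heq₁ : x₁ ^ 4 = y₁ ^ 4 + z₁ ^ 2 :=
      mul_left_cancel₀ (pow_ne_zero 4 (ne_of_gt hp0))
        (by linear_combination heq : (p:ℤ) ^ 4 * x₁ ^ 4 = (p:ℤ) ^ 4 * (y₁ ^ 4 + z₁ ^ 2))
    have hlt : x₁ < (p:ℤ) * x₁ := by nlinarith
    exact IH x₁.natAbs
      (lt_of_lt_of_le (Int.natAbs_lt_natAbs_of_nonneg_of_lt hx₁.le hlt) hX)
      x₁ y₁ z₁ le_rfl hx₁ hy₁ hz₁ heq₁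
  case pos =>
  have hcxy : IsCoprime x y := Int.isCoprime_iff_gcd_eq_one.mpr hg
  -- x is odd
  have hx2 : x % 2 = 1 := by
    rcases Int.emod_two_eq x with h | h
    · exfalso
      have h2x : (2 : ℤ) ∣ x := Int.dvd_of_emod_eq_zero h
      have hy2 : y % 2 = 1 := by
        rcases Int.emod_two_eq y with h' | h'
        · exfalso
          have h2y : (2 : ℤ) ∣ y := Int.dvd_of_emod_eq_zero h'
          have hd2 : (2 : ℤ) ∣ Int.gcd x y := Int.dvd_coe_gcd h2x h2y
          rw [hg] at hd2; norm_num at hd2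
        · exact h'
      obtain ⟨t, rfl⟩ := h2x
      obtain ⟨s, hs⟩ := Int.odd_iff.mpr hy2
      have contra : ∀ a b c : ZMod 16, (2*a)^4 ≠ (2*b+1)^4 + c^2 := by decide
      have h16 := congrArg (fun i : ℤ => (i : ZMod 16)) heq
      rw [hs] at h16
      push_cast at h16
      exact contra t s z h16
    · exact h
  -- z and y are coprime
  have hczy : IsCoprime z y := by
    have h4 : IsCoprime (x ^ 4) (y ^ 4) := (hcxy.pow : _)
    have h5 : IsCoprime (x ^ 4 + y ^ 4 * (-1)) (y ^ 4) := h4.add_mul_left_left (-1)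
    have hz4 : z ^ 2 = x ^ 4 + y ^ 4 * (-1) := by linarith
    rw [← hz4] at h5
    exact ((IsCoprime.pow_left_iff (by norm_num)).mp
      ((IsCoprime.pow_right_iff (by norm_num)).mp h5 : IsCoprime (z ^ 2) y))
  rcases Int.emod_two_eq z with hz2 | hz2
  · -- z even: direct descent via (y², z, x²)
    have hy2 : y % 2 = 1 := by
      rcases Int.emod_two_eq y with h' | h'
      · exfalso
        have h2y : (2 : ℤ) ∣ y := Int.dvd_of_emod_eq_zero h'
        have h2z : (2 : ℤ) ∣ z := Int.dvd_of_emod_eq_zero hz2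
        have h2x4 : (2 : ℤ) ∣ x ^ 4 := by
          rw [heq]; exact dvd_add (dvd_pow h2y (by norm_num)) (dvd_pow h2z (by norm_num))
        have h2x : ((2:ℕ):ℤ) ∣ x := Int.Prime.dvd_pow' Nat.prime_two (by exact_mod_cast h2x4)
        obtain ⟨q, rfl⟩ := h2x
        push_cast at hx2
        omega
      · exact h'
    have ht : PythagoreanTriple (y ^ 2) z (x ^ 2) := by
      rw [PythagoreanTriple]; linear_combination -heq
    have hgcd' : Int.gcd (y ^ 2) z = 1 :=
      Int.isCoprime_iff_gcd_eq_one.mp (hczy.symm.pow_left : _)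
    have hysq : y ^ 2 % 2 = 1 := by
      obtain ⟨s, hs⟩ := Int.odd_iff.mpr hy2
      have : y ^ 2 = 2 * (2 * s ^ 2 + 2 * s) + 1 := by rw [hs]; ring
      omega
    obtain ⟨m, n, hm1, hm2, hm3, hm4, -, hm6⟩ :=
      ht.coprime_classification' hgcd' hysq (by positivity)
    have hmn : 0 < m * n := by nlinarith
    have hm0 : 0 < m := by
      rcases hm6.lt_or_eq with h | h
      · exact h
      · exfalso; rw [← h] at hmn; simp at hmn
    have hn0 : 0 < n := by nlinarith
    have heq' : m ^ 4 = n ^ 4 + (x * y) ^ 2 := by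
      linear_combination (-(m^2 + n^2)) * hm1 - y^2 * hm3
    have hmx : m < x := by nlinarith
    exact IH m.natAbs
      (lt_of_lt_of_le (Int.natAbs_lt_natAbs_of_nonneg_of_lt hm0.le hmx) hX)
      m n (x * y) le_rfl hm0 hn0 (by positivity) heq'
  · -- z odd : triple (z, y², x²)
    have ht : PythagoreanTriple z (y ^ 2) (x ^ 2) := by
      rw [PythagoreanTriple]; linear_combination -heq
    have hgcd' : Int.gcd z (y ^ 2) = 1 :=
      Int.isCoprime_iff_gcd_eq_one.mp (hczy.pow_right : _)
    obtain ⟨m, n, hm1, hm2, hm3, hm4, hm5, hm6⟩ :=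
      ht.coprime_classification' hgcd' hz2 (by positivity)
    have hmn : 0 < m * n := by nlinarith [pow_pos hy 2]
    have hm0 : 0 < m := by
      rcases hm6.lt_or_eq with h | h
      · exact h
      · exfalso; rw [← h] at hmn; simp at hmn
    have hn0 : 0 < n := by nlinarith
    have hcmn : IsCoprime m n := Int.isCoprime_iff_gcd_eq_one.mpr hm4
    -- y is even
    have h2y : (2 : ℤ) ∣ y := by
      have hdvd : ((2:ℕ):ℤ) ∣ y ^ 2 := by push_cast; exact ⟨m * n, by linarith⟩
      exact_mod_cast Int.Prime.dvd_pow' Nat.prime_two hdvd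
    obtain ⟨w, rfl⟩ := h2y
    -- descent via step lemma, in both parity cases
    rcases hm5 with ⟨hme, hno⟩ | ⟨hmo, hne⟩
    · -- m even, n odd
      obtain ⟨m₁, rfl⟩ : (2 : ℤ) ∣ m := Int.dvd_of_emod_eq_zero hme
      have hw : m₁ * n = w ^ 2 := by
        apply mul_left_cancel₀ (show (4:ℤ) ≠ 0 by norm_num)
        linear_combination -hm2
      have hcop₁ : IsCoprime m₁ n :=
        IsCoprime.of_isCoprime_of_dvd_left hcmn ⟨2, by ring⟩
      have hm₁0 : 0 < m₁ := by nlinarith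
      obtain ⟨c, hc⟩ := Int.sq_of_isCoprime hcop₁ hw
      have hc' : m₁ = c ^ 2 := sq_eq_of_pos' hm₁0 hc
      obtain ⟨d, hd⟩ := Int.sq_of_isCoprime hcop₁.symm (by linarith [hw] : n * m₁ = w ^ 2)
      have hd' : n = d ^ 2 := sq_eq_of_pos' hn0 hd
      have hodd : d ^ 2 % 2 = 1 := by rw [← hd']; exact hno
      have hgd : Int.gcd (d ^ 2) (2 * c ^ 2) = 1 := by
        rw [← hd', show (2 : ℤ) * c ^ 2 = 2 * m₁ by rw [hc']]
        rw [Int.gcd_comm]; exact hm4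
      have heq'' : x ^ 2 = d ^ 4 + 4 * c ^ 4 := by
        have : x ^ 2 = (2 * m₁) ^ 2 + n ^ 2 := hm3
        rw [hc', hd'] at this; linear_combination this
      have hdpos : 0 < |d| := abs_pos.mpr (by rintro rfl; simp at hd'; omega)
      have hcpos : 0 < |c| := abs_pos.mpr (by rintro rfl; simp at hc'; omega)
      obtain ⟨g, h, w', pg, ph, pw, glt, geq⟩ :=
        descent_step x |d| |c| hx hdpos hcpos
          (by rw [sq_abs]; exact hodd) (by rw [sq_abs, sq_abs]; exact hgd)
          (by rw [abs_pow4, abs_pow4]; exact heq'')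
      exact IH g.natAbs
        (lt_of_lt_of_le (Int.natAbs_lt_natAbs_of_nonneg_of_lt pg.le glt) hX)
        g h w' le_rfl pg ph pw geq
    · -- m odd, n even
      obtain ⟨n₁, rfl⟩ : (2 : ℤ) ∣ n := Int.dvd_of_emod_eq_zero hne
      have hw : m * n₁ = w ^ 2 := by
        apply mul_left_cancel₀ (show (4:ℤ) ≠ 0 by norm_num)
        linear_combination -hm2
      have hcop₁ : IsCoprime m n₁ :=
        (IsCoprime.of_isCoprime_of_dvd_left hcmn.symm ⟨2, by ring⟩).symm
      have hn₁0 : 0 < n₁ := by nlinarith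
      obtain ⟨d, hd⟩ := Int.sq_of_isCoprime hcop₁ hw
      have hd' : m = d ^ 2 := sq_eq_of_pos' hm0 hd
      obtain ⟨c, hc⟩ := Int.sq_of_isCoprime hcop₁.symm (by linarith [hw] : n₁ * m = w ^ 2)
      have hc' : n₁ = c ^ 2 := sq_eq_of_pos' hn₁0 hc
      have hodd : d ^ 2 % 2 = 1 := by rw [← hd']; exact hmo
      have hgd : Int.gcd (d ^ 2) (2 * c ^ 2) = 1 := by
        rw [← hd', show (2 : ℤ) * c ^ 2 = 2 * n₁ by rw [hc']]
        exact hm4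
      have heq'' : x ^ 2 = d ^ 4 + 4 * c ^ 4 := by
        have : x ^ 2 = m ^ 2 + (2 * n₁) ^ 2 := hm3
        rw [hc', hd'] at this; linear_combination this
      have hdpos : 0 < |d| := abs_pos.mpr (by rintro rfl; simp at hd'; omega)
      have hcpos : 0 < |c| := abs_pos.mpr (by rintro rfl; simp at hc'; omega)
      obtain ⟨g, h, w', pg, ph, pw, glt, geq⟩ :=
        descent_step x |d| |c| hx hdpos hcpos
          (by rw [sq_abs]; exact hodd) (by rw [sq_abs, sq_abs]; exact hgd)
          (by rw [abs_pow4, abs_pow4]; exact heq'')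
      exact IH g.natAbs
        (lt_of_lt_of_le (Int.natAbs_lt_natAbs_of_nonneg_of_lt pg.le glt) hX)
        g h w' le_rfl pg ph pw geq

lemma no_fermat44 (x y z : ℤ) (hx : 0 < x) (hy : 0 < y) (hz : 0 < z) :
    x ^ 4 ≠ y ^ 4 + z ^ 2 :=
  no_fermat_quartic x.natAbs x y z le_rfl hx hy hz

private lemma sq_mod8_cases (a : ℕ) :
    (a % 2 = 1 ∧ a ^ 2 % 8 = 1) ∨ (a % 2 = 0 ∧ (a ^ 2 % 8 = 0 ∨ a ^ 2 % 8 = 4)) := by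
  have key : ∀ b < 8, (b % 2 = 1 → b ^ 2 % 8 = 1) ∧
      (b % 2 = 0 → b ^ 2 % 8 = 0 ∨ b ^ 2 % 8 = 4) := by decide
  have h := key (a % 8) (Nat.mod_lt _ (by norm_num))
  rw [Nat.pow_mod]
  rcases Nat.mod_two_eq_zero_or_one a with h2 | h2
  · right; exact ⟨h2, h.2 (by omega)⟩
  · left; exact ⟨h2, h.1 (by omega)⟩

private lemma pow_mod8' (d : ℕ) (hd : d % 8 = 3 ∨ d % 8 = 5) (k : ℕ) :
    d ^ k % 8 = if k % 2 = 0 then 1 else d % 8 := by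
  induction k with
  | zero => simp
  | succ k ih =>
    rw [pow_succ, Nat.mul_mod, ih]
    rcases hd with h | h <;> rw [h] <;> split_ifs <;> omega

/-- With `m² + n² ≡ 5 (mod 8)`: if `u² - v² = (m²-n²)^r` and `u² + v² = (m²+n²)^k`
for a primitive pair `(u, v)`, then `r` and `k` are odd. -/
theorem exponents_odd_of_pythagorean_decomposition
    (m n : ℕ) (hm : 0 < m) (hn : 0 < n) (hmn : n < m)
    (hgcd : Nat.gcd m n = 1) (hpar : m % 2 ≠ n % 2)
    (hmod : (m ^ 2 + n ^ 2) % 8 = 5)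
    (u v : ℕ) (hu : 0 < u) (hv : 0 < v) (huv : v < u)
    (hgcduv : Nat.gcd u v = 1) (hparuv : u % 2 ≠ v % 2)
    (r k : ℕ) (hr : 0 < r) (hk : 0 < k)
    (h1 : u ^ 2 - v ^ 2 = (m ^ 2 - n ^ 2) ^ r)
    (h2 : u ^ 2 + v ^ 2 = (m ^ 2 + n ^ 2) ^ k) :
    Odd r ∧ Odd k := by
  have hv2 : v ^ 2 < u ^ 2 := by nlinarith
  have hn2 : n ^ 2 < m ^ 2 := by nlinarith
  have hu8 := sq_mod8_cases u
  have hv8 := sq_mod8_cases v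
  have hm8 := sq_mod8_cases m
  have hn8 := sq_mod8_cases n
  have hD8 : (m ^ 2 - n ^ 2) % 8 = 3 ∨ (m ^ 2 - n ^ 2) % 8 = 5 := by omega
  have hP := pow_mod8' (m ^ 2 - n ^ 2) hD8 r
  have hQ := pow_mod8' (m ^ 2 + n ^ 2) (Or.inr hmod) k
  have hP' : (r % 2 = 0 ∧ (m ^ 2 - n ^ 2) ^ r % 8 = 1) ∨
      (r % 2 = 1 ∧ (m ^ 2 - n ^ 2) ^ r % 8 = (m ^ 2 - n ^ 2) % 8) := by
    split_ifs at hP with h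
    · exact Or.inl ⟨h, hP⟩
    · exact Or.inr ⟨by omega, hP⟩
  have hQ' : (k % 2 = 0 ∧ (m ^ 2 + n ^ 2) ^ k % 8 = 1) ∨
      (k % 2 = 1 ∧ (m ^ 2 + n ^ 2) ^ k % 8 = 5) := by
    split_ifs at hQ with h
    · exact Or.inl ⟨h, hQ⟩
    · exact Or.inr ⟨by omega, by rw [hQ, hmod]⟩
  have key : (r % 2 = 1 ∧ k % 2 = 1) ∨ (r % 2 = 0 ∧ k % 2 = 0 ∧ u % 2 = 1) := by omega
  rcases key with ⟨hr1, hk1⟩ | ⟨hr0, hk0, hu1⟩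
  · exact ⟨Nat.odd_iff.mpr hr1, Nat.odd_iff.mpr hk1⟩
  · exfalso
    obtain ⟨r', rfl⟩ : ∃ r', r = 2 * r' := ⟨r / 2, by omega⟩
    obtain ⟨k', rfl⟩ : ∃ k', k = 2 * k' := ⟨k / 2, by omega⟩
    have hA2 : ((m ^ 2 - n ^ 2) ^ r') ^ 2 = (m ^ 2 - n ^ 2) ^ (2 * r') := by
      rw [← pow_mul, Nat.mul_comm]
    have hB2 : ((m ^ 2 + n ^ 2) ^ k') ^ 2 = (m ^ 2 + n ^ 2) ^ (2 * k') := by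
      rw [← pow_mul, Nat.mul_comm]
    have h1' : u ^ 2 = v ^ 2 + ((m ^ 2 - n ^ 2) ^ r') ^ 2 := by omega
    have h2' : u ^ 2 + v ^ 2 = ((m ^ 2 + n ^ 2) ^ k') ^ 2 := by omega
    have c1 : (u : ℤ) ^ 2 = (v : ℤ) ^ 2 + (((m ^ 2 - n ^ 2) ^ r' : ℕ) : ℤ) ^ 2 := by
      exact_mod_cast h1'
    have c2 : (u : ℤ) ^ 2 + (v : ℤ) ^ 2 = (((m ^ 2 + n ^ 2) ^ k' : ℕ) : ℤ) ^ 2 := by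
      exact_mod_cast h2'
    have heqZ : (u : ℤ) ^ 4 = (v : ℤ) ^ 4 +
        ((((m ^ 2 - n ^ 2) ^ r' : ℕ) : ℤ) * (((m ^ 2 + n ^ 2) ^ k' : ℕ) : ℤ)) ^ 2 := by
      linear_combination ((u : ℤ) ^ 2 + (v : ℤ) ^ 2) * c1 +
        (((m ^ 2 - n ^ 2) ^ r' : ℕ) : ℤ) ^ 2 * c2
    have hApos : (0 : ℤ) < (((m ^ 2 - n ^ 2) ^ r' : ℕ) : ℤ) := by
      have : 0 < (m ^ 2 - n ^ 2) ^ r' := pow_pos (by omega) r'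
      exact_mod_cast this
    have hBpos : (0 : ℤ) < (((m ^ 2 + n ^ 2) ^ k' : ℕ) : ℤ) := by
      have : 0 < (m ^ 2 + n ^ 2) ^ k' := pow_pos (by omega) k'
      exact_mod_cast this
    exact no_fermat44 (u : ℤ) (v : ℤ) _
      (by exact_mod_cast hu) (by exact_mod_cast hv) (mul_pos hApos hBpos) heqZ
end

section
/- Let c and d be integers and let k be a positive integer with k ≡ 1 (mod 4). Then in the ring of Gaussian integers ℤ[i], c + d divides (c + di)^k(1 − i) + (c − di)^k(1 + i), and c − d divides (c + di)^k(1 + i) + (c − di)^k(1 − i). -/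
/-- For integers `c, d` and a positive integer `k ≡ 1 (mod 4)`, in the Gaussian
integers `c + d` divides `(c+di)^k(1-i) + (c-di)^k(1+i)` and `c - d` divides
`(c+di)^k(1+i) + (c-di)^k(1-i)`. -/
theorem gaussian_dvd_of_k_mod_four_eq_one
    (c d : ℤ) (k : ℕ) (hk : 0 < k) (hkmod : k % 4 = 1) :
    (((c + d : ℤ) : GaussianInt) ∣
      ((c : GaussianInt) + (d : GaussianInt) * Zsqrtd.sqrtd) ^ k * (1 - Zsqrtd.sqrtd)
        + ((c : GaussianInt) - (d : GaussianInt) * Zsqrtd.sqrtd) ^ k * (1 + Zsqrtd.sqrtd))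
    ∧ (((c - d : ℤ) : GaussianInt) ∣
      ((c : GaussianInt) + (d : GaussianInt) * Zsqrtd.sqrtd) ^ k * (1 + Zsqrtd.sqrtd)
        + ((c : GaussianInt) - (d : GaussianInt) * Zsqrtd.sqrtd) ^ k * (1 - Zsqrtd.sqrtd)) := by
  obtain ⟨j, rfl⟩ : ∃ j, k = 4 * j + 1 := ⟨k / 4, by omega⟩
  set I : GaussianInt := Zsqrtd.sqrtd with hIdef
  have hI : I * I = -1 := by
    rw [hIdef, Zsqrtd.dmuld]; rfl
  set a : GaussianInt := (c : GaussianInt) + (d : GaussianInt) * I with ha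
  set b : GaussianInt := (c : GaussianInt) - (d : GaussianInt) * I with hb
  set D : GaussianInt := (d : GaussianInt) with hD
  constructor
  · -- modulo c + d
    set t : GaussianInt := ((c + d : ℤ) : GaussianInt) with htdef
    have ht : t = (c : GaussianInt) + D := by push_cast [htdef]; ring
    set A : GaussianInt := D * (I - 1) with hA
    set B : GaussianInt := -D * (1 + I) with hB
    have h1 : t ∣ a ^ (4*j+1) - A ^ (4*j+1) :=
      dvd_trans (by rw [ht, ha, hA]; exact ⟨1, by ring⟩) (sub_dvd_pow_sub_pow a A _)
    have h2 : t ∣ b ^ (4*j+1) - B ^ (4*j+1) :=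
      dvd_trans (by rw [ht, hb, hB]; exact ⟨1, by ring⟩) (sub_dvd_pow_sub_pow b B _)
    have h4 : B ^ 4 = A ^ 4 := by
      rw [hA, hB]; linear_combination (8 * D ^ 4 * I) * hI
    have hz : A * (1 - I) + B * (1 + I) = 0 := by
      rw [hA, hB]; linear_combination (-2 * D) * hI
    have hzero : A ^ (4*j+1) * (1 - I) + B ^ (4*j+1) * (1 + I) = 0 := by
      have hA' : A ^ (4*j+1) = (A ^ 4) ^ j * A := by
        rw [pow_succ, pow_mul]
      have hB' : B ^ (4*j+1) = (A ^ 4) ^ j * B := by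
        rw [pow_succ, pow_mul, h4]
      rw [hA', hB']; linear_combination ((A ^ 4) ^ j) * hz
    have := dvd_add (h1.mul_right (1 - I)) (h2.mul_right (1 + I))
    have heq : (a ^ (4*j+1) - A ^ (4*j+1)) * (1 - I) + (b ^ (4*j+1) - B ^ (4*j+1)) * (1 + I)
        = a ^ (4*j+1) * (1 - I) + b ^ (4*j+1) * (1 + I) := by
      linear_combination -hzero
    rwa [heq] at this
  · -- modulo c - d
    set t : GaussianInt := ((c - d : ℤ) : GaussianInt) with htdef
    have ht : t = (c : GaussianInt) - D := by push_cast [htdef]; ring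
    set A : GaussianInt := D * (1 + I) with hA
    set B : GaussianInt := D * (1 - I) with hB
    have h1 : t ∣ a ^ (4*j+1) - A ^ (4*j+1) :=
      dvd_trans (by rw [ht, ha, hA]; exact ⟨1, by ring⟩) (sub_dvd_pow_sub_pow a A _)
    have h2 : t ∣ b ^ (4*j+1) - B ^ (4*j+1) :=
      dvd_trans (by rw [ht, hb, hB]; exact ⟨1, by ring⟩) (sub_dvd_pow_sub_pow b B _)
    have h4 : B ^ 4 = A ^ 4 := by
      rw [hA, hB]; linear_combination (-8 * D ^ 4 * I) * hI
    have hz : A * (1 + I) + B * (1 - I) = 0 := by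
      rw [hA, hB]; linear_combination (2 * D) * hI
    have hzero : A ^ (4*j+1) * (1 + I) + B ^ (4*j+1) * (1 - I) = 0 := by
      have hA' : A ^ (4*j+1) = (A ^ 4) ^ j * A := by
        rw [pow_succ, pow_mul]
      have hB' : B ^ (4*j+1) = (A ^ 4) ^ j * B := by
        rw [pow_succ, pow_mul, h4]
      rw [hA', hB']; linear_combination ((A ^ 4) ^ j) * hz
    have := dvd_add (h1.mul_right (1 + I)) (h2.mul_right (1 - I))
    have heq : (a ^ (4*j+1) - A ^ (4*j+1)) * (1 + I) + (b ^ (4*j+1) - B ^ (4*j+1)) * (1 - I)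
        = a ^ (4*j+1) * (1 + I) + b ^ (4*j+1) * (1 - I) := by
      linear_combination -hzero
    rwa [heq] at this
end

section
/- Let c and d be integers and let k be a positive integer with k ≡ 3 (mod 4). Then in the ring of Gaussian integers ℤ[i], c − d divides (c + di)^k(1 − i) + (c − di)^k(1 + i), and c + d divides (c + di)^k(1 + i) + (c − di)^k(1 − i). -/
lemma gaussian_sqrtd_sq : (Zsqrtd.sqrtd : GaussianInt) ^ 2 = -1 := by decide

lemma gaussian_aux (m : ℕ) :
    ((1 + Zsqrtd.sqrtd) ^ (4 * m + 3) * (1 - Zsqrtd.sqrtd)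
      + (1 - Zsqrtd.sqrtd) ^ (4 * m + 3) * (1 + Zsqrtd.sqrtd) : GaussianInt) = 0 := by
  have hsq := gaussian_sqrtd_sq
  induction m with
  | zero =>
      linear_combination (2 - 2 * (Zsqrtd.sqrtd : GaussianInt) ^ 2) * hsq
  | succ n ih =>
      have h4 : 4 * (n + 1) + 3 = (4 * n + 3) + 4 := by ring
      rw [h4]
      have e1 : ((1 + Zsqrtd.sqrtd : GaussianInt)) ^ 4 = -4 := by
        linear_combination ((Zsqrtd.sqrtd : GaussianInt) ^ 2 + 4 * Zsqrtd.sqrtd + 5) * hsq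
      have e2 : ((1 - Zsqrtd.sqrtd : GaussianInt)) ^ 4 = -4 := by
        linear_combination ((Zsqrtd.sqrtd : GaussianInt) ^ 2 - 4 * Zsqrtd.sqrtd + 5) * hsq
      linear_combination ((1 - Zsqrtd.sqrtd) * (1 + Zsqrtd.sqrtd) ^ (4 * n + 3) : GaussianInt) * e1
        + ((1 + Zsqrtd.sqrtd) * (1 - Zsqrtd.sqrtd) ^ (4 * n + 3) : GaussianInt) * e2
        + (-4 : GaussianInt) * ih

/-- For integers `c, d` and a positive integer `k ≡ 3 (mod 4)`, in the Gaussian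
integers `c - d` divides `(c+di)^k(1-i) + (c-di)^k(1+i)` and `c + d` divides
`(c+di)^k(1+i) + (c-di)^k(1-i)`. -/
theorem gaussian_dvd_of_k_mod_four_eq_three
    (c d : ℤ) (k : ℕ) (hk : 0 < k) (hkmod : k % 4 = 3) :
    (((c - d : ℤ) : GaussianInt) ∣
      ((c : GaussianInt) + (d : GaussianInt) * Zsqrtd.sqrtd) ^ k * (1 - Zsqrtd.sqrtd)
        + ((c : GaussianInt) - (d : GaussianInt) * Zsqrtd.sqrtd) ^ k * (1 + Zsqrtd.sqrtd))
    ∧ (((c + d : ℤ) : GaussianInt) ∣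
      ((c : GaussianInt) + (d : GaussianInt) * Zsqrtd.sqrtd) ^ k * (1 + Zsqrtd.sqrtd)
        + ((c : GaussianInt) - (d : GaussianInt) * Zsqrtd.sqrtd) ^ k * (1 - Zsqrtd.sqrtd)) := by
  obtain ⟨m, rfl⟩ : ∃ m, k = 4 * m + 3 := ⟨k / 4, by omega⟩
  set i : GaussianInt := Zsqrtd.sqrtd with hi
  set A : GaussianInt := (c : GaussianInt) + (d : GaussianInt) * i with hA
  set C : GaussianInt := (c : GaussianInt) - (d : GaussianInt) * i with hC
  have key := gaussian_aux m
  constructor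
  · have h1 : ((c - d : ℤ) : GaussianInt)
        ∣ A ^ (4 * m + 3) - ((d : GaussianInt) * (1 + i)) ^ (4 * m + 3) := by
      have h : ((c - d : ℤ) : GaussianInt) = A - (d : GaussianInt) * (1 + i) := by
        push_cast [hA]; ring
      rw [h]; exact sub_dvd_pow_sub_pow _ _ _
    have h2 : ((c - d : ℤ) : GaussianInt)
        ∣ C ^ (4 * m + 3) - ((d : GaussianInt) * (1 - i)) ^ (4 * m + 3) := by
      have h : ((c - d : ℤ) : GaussianInt) = C - (d : GaussianInt) * (1 - i) := by
        push_cast [hC]; ring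
      rw [h]; exact sub_dvd_pow_sub_pow _ _ _
    rw [mul_pow] at h1 h2
    have heq : A ^ (4 * m + 3) * (1 - i) + C ^ (4 * m + 3) * (1 + i)
        = (A ^ (4 * m + 3) - (d : GaussianInt) ^ (4 * m + 3) * (1 + i) ^ (4 * m + 3)) * (1 - i)
          + (C ^ (4 * m + 3) - (d : GaussianInt) ^ (4 * m + 3) * (1 - i) ^ (4 * m + 3)) * (1 + i) := by
      linear_combination (d : GaussianInt) ^ (4 * m + 3) * key
    rw [heq]
    exact dvd_add (h1.mul_right _) (h2.mul_right _)
  · have hodd : Odd (4 * m + 3) := ⟨2 * m + 1, by ring⟩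
    have h1 : ((c + d : ℤ) : GaussianInt)
        ∣ A ^ (4 * m + 3) - (-((d : GaussianInt) * (1 - i))) ^ (4 * m + 3) := by
      have h : ((c + d : ℤ) : GaussianInt) = A - (-((d : GaussianInt) * (1 - i))) := by
        push_cast [hA]; ring
      rw [h]; exact sub_dvd_pow_sub_pow _ _ _
    have h2 : ((c + d : ℤ) : GaussianInt)
        ∣ C ^ (4 * m + 3) - (-((d : GaussianInt) * (1 + i))) ^ (4 * m + 3) := by
      have h : ((c + d : ℤ) : GaussianInt) = C - (-((d : GaussianInt) * (1 + i))) := by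
        push_cast [hC]; ring
      rw [h]; exact sub_dvd_pow_sub_pow _ _ _
    rw [hodd.neg_pow, mul_pow] at h1 h2
    have heq : A ^ (4 * m + 3) * (1 + i) + C ^ (4 * m + 3) * (1 - i)
        = (A ^ (4 * m + 3) + (d : GaussianInt) ^ (4 * m + 3) * (1 - i) ^ (4 * m + 3)) * (1 + i)
          + (C ^ (4 * m + 3) + (d : GaussianInt) ^ (4 * m + 3) * (1 + i) ^ (4 * m + 3)) * (1 - i) := by
      linear_combination (-(d : GaussianInt) ^ (4 * m + 3)) * key
    rw [heq]
    simp only [sub_neg_eq_add] at h1 h2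
    exact dvd_add (h1.mul_right _) (h2.mul_right _)
end

section
/- Let m and n be positive integers with m > n, gcd(m,n) = 1 and m ≢ n (mod 2). Let c and d be integers with c² + d² = m² + n², c² − d² = ±(m² − n²) and cd = ±mn, and let k > 1 and r > 1 be integers with k odd. If in the Gaussian integers ℤ[i] one has (c + di)^{2k} + (c − di)^{2k} = 2(m² − n²)^r, then m² − n² divides k. -/
theorem binom_aux {R : Type*} [CommRing R] (D x y : R) (hx : D ∣ x) :
    ∀ K : ℕ, D^2 ∣ (x+y)^(K+1) - y^(K+1) - ((K+1 : ℕ) : R) * x * y^K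
  | 0 => by
      have h : (x+y)^1 - y^1 - ((0+1 : ℕ) : R) * x * y^0 = 0 := by push_cast; ring
      rw [h]; exact dvd_zero _
  | (K+1) => by
      have IH := binom_aux D x y hx K
      have hx2 : D^2 ∣ x^2 := pow_dvd_pow_of_dvd hx 2
      have h : (x+y)^(K+1+1) - y^(K+1+1) - ((K+1+1:ℕ):R)*x*y^(K+1)
          = (x+y) * ((x+y)^(K+1) - y^(K+1) - ((K+1:ℕ):R)*x*y^K) + ((K+1:ℕ):R)*(x^2*y^K) := by
        push_cast; ring
      rw [h]
      exact dvd_add (IH.mul_left _) ((hx2.mul_right _).mul_left _)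

/-- Under the hypotheses `c² + d² = m² + n²`, `c² - d² = ±(m² - n²)`, `cd = ±mn`,
with `k, r > 1` and `k` odd: if `(c+di)^(2k) + (c-di)^(2k) = 2(m²-n²)^r` in the
Gaussian integers, then `m² - n²` divides `k`. -/
theorem sq_sub_sq_dvd_k
    (m n : ℕ) (hm : 0 < m) (hn : 0 < n) (hmn : n < m)
    (hgcd : Nat.gcd m n = 1) (hpar : m % 2 ≠ n % 2)
    (c d : ℤ)
    (h1 : c ^ 2 + d ^ 2 = (m : ℤ) ^ 2 + (n : ℤ) ^ 2)
    (h2 : c ^ 2 - d ^ 2 = ((m : ℤ) ^ 2 - (n : ℤ) ^ 2)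
          ∨ c ^ 2 - d ^ 2 = -((m : ℤ) ^ 2 - (n : ℤ) ^ 2))
    (h3 : c * d = (m : ℤ) * n ∨ c * d = -((m : ℤ) * n))
    (k r : ℕ) (hk : 1 < k) (hr : 1 < r) (hkodd : Odd k)
    (heq : ((c : GaussianInt) + (d : GaussianInt) * Zsqrtd.sqrtd) ^ (2 * k)
        + ((c : GaussianInt) - (d : GaussianInt) * Zsqrtd.sqrtd) ^ (2 * k)
        = ((2 * ((m : ℤ) ^ 2 - (n : ℤ) ^ 2) ^ r : ℤ) : GaussianInt)) :
    (m ^ 2 - n ^ 2) ∣ k := by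
  set D : ℤ := (m:ℤ)^2 - (n:ℤ)^2 with hD
  set a : ℤ := c^2 - d^2 with ha
  set b : ℤ := 2*c*d with hb
  obtain ⟨j, hj⟩ := hkodd
  -- basic facts
  have hnm : (n:ℤ) < m := by exact_mod_cast hmn
  have hDpos : 0 < D := by nlinarith
  have hi : (Zsqrtd.sqrtd : GaussianInt) * Zsqrtd.sqrtd = -1 := by
    decide
  -- squares
  have hsq1 : ((c : GaussianInt) + (d : GaussianInt) * Zsqrtd.sqrtd) ^ 2
      = ((a : ℤ) : GaussianInt) + ((b : ℤ) : GaussianInt) * Zsqrtd.sqrtd := by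
    push_cast [ha, hb]
    linear_combination ((d:ℤ) : GaussianInt)^2 * hi
  have hsq2 : ((c : GaussianInt) - (d : GaussianInt) * Zsqrtd.sqrtd) ^ 2
      = ((a : ℤ) : GaussianInt) + ((-b : ℤ) : GaussianInt) * Zsqrtd.sqrtd := by
    push_cast [ha, hb]
    linear_combination ((d:ℤ) : GaussianInt)^2 * hi
  have hDa : ((D:ℤ) : GaussianInt) ∣ ((a:ℤ) : GaussianInt) := by
    rw [Zsqrtd.intCast_dvd_intCast]
    rcases h2 with h | h
    · exact ⟨1, by rw [h]; ring⟩
    · exact ⟨-1, by rw [h]; ring⟩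
  -- rewrite heq
  rw [pow_mul, pow_mul, hsq1, hsq2] at heq
  -- apply binom_aux with k = K+1, K = 2*j  (k = 2*j+1)
  have hk1 : k = 2*j + 1 := hj
  have H1 := binom_aux ((D:ℤ) : GaussianInt) ((a:ℤ) : GaussianInt)
      (((b:ℤ) : GaussianInt) * Zsqrtd.sqrtd) hDa (2*j)
  have H2 := binom_aux ((D:ℤ) : GaussianInt) ((a:ℤ) : GaussianInt)
      (((-b:ℤ) : GaussianInt) * Zsqrtd.sqrtd) hDa (2*j)
  rw [hk1] at heq
  have hsum := dvd_add H1 H2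
  -- express the sum as 2*D^r - T
  have hT : (((a:ℤ):GaussianInt) + ((b:ℤ):GaussianInt)*Zsqrtd.sqrtd)^(2*j+1)
        - (((b:ℤ):GaussianInt)*Zsqrtd.sqrtd)^(2*j+1)
        - ((2*j+1 : ℕ):GaussianInt) * ((a:ℤ):GaussianInt) * (((b:ℤ):GaussianInt)*Zsqrtd.sqrtd)^(2*j)
      + ((((a:ℤ):GaussianInt) + ((-b:ℤ):GaussianInt)*Zsqrtd.sqrtd)^(2*j+1)
        - (((-b:ℤ):GaussianInt)*Zsqrtd.sqrtd)^(2*j+1)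
        - ((2*j+1 : ℕ):GaussianInt) * ((a:ℤ):GaussianInt) * (((-b:ℤ):GaussianInt)*Zsqrtd.sqrtd)^(2*j))
      = ((2 * D ^ r : ℤ) : GaussianInt)
        - (((2 * (2*j+1) * a * b^(2*j) * (-1)^j : ℤ)) : GaussianInt) := by
    rw [← heq]
    have e1 : (((-b:ℤ):GaussianInt)*Zsqrtd.sqrtd)^(2*j+1)
        = - ((((b:ℤ):GaussianInt)*Zsqrtd.sqrtd)^(2*j+1)) := by
      push_cast
      rw [show (-(b:GaussianInt)) * Zsqrtd.sqrtd = -((b:GaussianInt) * Zsqrtd.sqrtd) by ring]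
      exact Odd.neg_pow ⟨j, by ring⟩ _
    have e2 : (Zsqrtd.sqrtd : GaussianInt)^(2*j) = ((-1 : ℤ)^j : ℤ) := by
      rw [pow_mul, sq, hi]
      push_cast
      ring
    have e3 : ∀ t : GaussianInt, (t * Zsqrtd.sqrtd)^(2*j) = t^(2*j) * (((-1:ℤ)^j : ℤ) : GaussianInt) := by
      intro t; rw [mul_pow, e2]
    have e0 : ((-b : ℤ) : GaussianInt) * Zsqrtd.sqrtd = -(((b:ℤ):GaussianInt) * Zsqrtd.sqrtd) := by
      push_cast; ring
    have e5 : (-(((b:ℤ):GaussianInt) * Zsqrtd.sqrtd))^(2*j)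
        = (((b:ℤ):GaussianInt) * Zsqrtd.sqrtd)^(2*j) := Even.neg_pow ⟨j, by ring⟩ _
    rcases Nat.even_or_odd j with hje | hje
    · rw [hje.neg_one_pow] at e3
      rw [e1, e0, e5, e3]
      push_cast [hje.neg_one_pow]
      ring
    · rw [hje.neg_one_pow] at e3
      rw [e1, e0, e5, e3]
      push_cast [hje.neg_one_pow]
      ring
  rw [hT] at hsum
  -- D^2 divides 2*D^r
  have hD2r : ((D:ℤ):GaussianInt)^2 ∣ ((2 * D ^ r : ℤ) : GaussianInt) := by
    have : (D:ℤ)^2 ∣ 2 * D^r := by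
      have : D^2 ∣ D^r := pow_dvd_pow D hr
      exact this.mul_left 2
    have h' := (Zsqrtd.intCast_dvd_intCast (d := -1) (D^2) (2*D^r)).mpr this
    push_cast at h' ⊢
    exact h'
  have hTint : (D:ℤ)^2 ∣ 2 * (2*j+1) * a * b^(2*j) * (-1)^j := by
    have h' : ((D:ℤ):GaussianInt)^2 ∣ (((2 * (2*j+1) * a * b^(2*j) * (-1)^j : ℤ)) : GaussianInt) := by
      have h2' := dvd_sub hD2r hsum
      rwa [sub_sub_cancel] at h2'
    rw [show ((D:ℤ):GaussianInt)^2 = (((D^2 : ℤ)):GaussianInt) by push_cast; ring] at h'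
    exact (Zsqrtd.intCast_dvd_intCast _ _).mp h'
  -- remove the (-1)^j factor
  have hTint2 : D^2 ∣ 2 * (2*j+1) * a * b^(2*j) := by
    have := hTint.mul_right ((-1:ℤ)^j)
    have e : 2 * (2*j+1) * a * b^(2*j) * (-1)^j * (-1)^j = 2 * (2*j+1) * a * b^(2*j) := by
      rw [mul_assoc, ← pow_add, ← two_mul, pow_mul]
      norm_num
    rwa [e] at this
  -- cases on a = ±D, get D ∣ 2*(2j+1)*b^(2j)
  have hDdvd : D ∣ 2 * (2*j+1) * b^(2*j) := by
    have hDD : D * D ∣ D * (2 * (2*j+1) * b^(2*j)) := by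
      rcases h2 with h | h
      · have : a = D := h
        calc D * D = D^2 := (sq D).symm
        _ ∣ 2 * (2*j+1) * a * b^(2*j) := hTint2
        _ = D * (2 * (2*j+1) * b^(2*j)) := by rw [this]; ring
      · have hae : a = -D := h
        have : D^2 ∣ -(2 * (2*j+1) * a * b^(2*j)) := hTint2.neg_right
        calc D * D = D^2 := (sq D).symm
        _ ∣ -(2 * (2*j+1) * a * b^(2*j)) := this
        _ = D * (2 * (2*j+1) * b^(2*j)) := by rw [hae]; ring
    exact (mul_dvd_mul_iff_left hDpos.ne').mp hDD
  -- coprimality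
  have hcop : IsCoprime (m:ℤ) (n:ℤ) := by
    rw [Int.isCoprime_iff_gcd_eq_one]
    simpa [Int.gcd_natCast_natCast] using hgcd
  have hDm : IsCoprime D (m:ℤ) := by
    have h0 : IsCoprime (-(n:ℤ)^2) (m:ℤ) := (hcop.symm.pow_left).neg_left
    have := h0.add_mul_left_left (m:ℤ)
    rwa [show -(n:ℤ)^2 + (m:ℤ)*(m:ℤ) = D by rw [hD]; ring] at this
  have hDn : IsCoprime D (n:ℤ) := by
    have h0 : IsCoprime ((m:ℤ)^2) (n:ℤ) := hcop.pow_left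
    have := h0.add_mul_left_left (-(n:ℤ))
    rwa [show (m:ℤ)^2 + (n:ℤ)*(-(n:ℤ)) = D by rw [hD]; ring] at this
  have hDodd : Odd D := by
    rw [← Int.not_even_iff_odd, hD, Int.even_sub]
    simp only [Int.even_pow]
    rw [Int.even_coe_nat, Int.even_coe_nat, Nat.even_iff, Nat.even_iff]
    omega
  have hD2 : IsCoprime D 2 := by
    obtain ⟨t, ht⟩ := hDodd
    exact ⟨1, -t, by rw [ht]; ring⟩
  have hDb : IsCoprime D b := by
    have hbase : IsCoprime D (2*((m:ℤ)*n)) := hD2.mul_right (hDm.mul_right hDn)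
    rcases h3 with h | h
    · rwa [hb, show 2*c*d = 2*(c*d) by ring, h]
    · rw [hb, show 2*c*d = 2*(c*d) by ring, h]
      rw [show (2 : ℤ)*(-((m:ℤ)*n)) = -(2*((m:ℤ)*n)) by ring]
      exact hbase.neg_right
  have hfinal : D ∣ ((2*j+1 : ℕ) : ℤ) := by
    have hcop2 : IsCoprime D (2 * b^(2*j)) := hD2.mul_right (hDb.pow_right)
    have hthis : D ∣ (2 * b^(2*j)) * (2*(j:ℤ)+1) := by
      have e : (2 * b^(2*j)) * (2*(j:ℤ)+1) = 2 * (2*(j:ℤ)+1) * b^(2*j) := by ring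
      rw [e]; exact hDdvd
    push_cast
    exact hcop2.dvd_of_dvd_mul_left hthis
  rw [hk1]
  have hcast : ((m^2 - n^2 : ℕ) : ℤ) = D := by
    rw [hD]
    push_cast [Nat.pow_le_pow_left hmn.le 2]
    ring
  rw [← Int.natCast_dvd_natCast, hcast]
  exact_mod_cast hfinal
end
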